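/- Let S be a non-symmetric numerical semigroup with m(S) < F(S). If S is almost symmetric and has maximal reduced type, then S = Δ(m(S)) \ {2·m(S) − t(S)} with 2 ≤ t(S) < m(S). -/

import Mathlib

/-- A numerical semigroup: a subset of ℕ containing 0, closed under addition,
with finite complement. -/
noncomputable def IsNumericalSemigroup (S : Set ℕ) : Prop :=
  0 ∈ S ∧ (∀ a ∈ S, ∀ b ∈ S, a + b ∈ S) ∧ Sᶜ.Finite

/-- The half-line Δ(m) = {0} ∪ {x : m ≤ x}. -/
noncomputable def Delta (m : ℕ) : Set ℕ := {0} ∪ {x | m ≤ x}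

/-- Multiplicity: least nonzero element. -/
noncomputable def mult (S : Set ℕ) : ℕ := sInf {s ∈ S | s ≠ 0}

/-- Frobenius number: largest gap. -/
noncomputable def frob (S : Set ℕ) : ℕ := sSup Sᶜ

/-- Genus: number of gaps. -/
noncomputable def genus (S : Set ℕ) : ℕ := Sᶜ.ncard

/-- The image of S in ℤ. -/
noncomputable def ZS (S : Set ℕ) : Set ℤ := (fun n : ℕ => (n : ℤ)) '' S

/-- Pseudo-Frobenius numbers (as integers). -/
noncomputable def PF (S : Set ℕ) : Set ℤ :=
  {x | x ∉ ZS S ∧ ∀ s ∈ S, s ≠ 0 → x + (s : ℤ) ∈ ZS S}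

/-- Reduced pseudo-Frobenius set. -/
noncomputable def rPF (S : Set ℕ) : Set ℤ :=
  {x | x ∉ ZS S ∧ (frob S : ℤ) - (mult S : ℤ) + 1 ≤ x ∧ x ≤ (frob S : ℤ)}

/-- Type t(S). -/
noncomputable def typ (S : Set ℕ) : ℕ := (PF S).ncard

/-- Reduced type s(S). -/
noncomputable def redtyp (S : Set ℕ) : ℕ := (rPF S).ncard

/-- Apéry set of n in S. -/
noncomputable def Ap (S : Set ℕ) (n : ℕ) : Set ℕ := {s ∈ S | ∀ u : ℕ, s = u + n → u ∉ S}

/-- Minimal system of generators. -/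
noncomputable def msg (S : Set ℕ) : Set ℕ :=
  (S \ {0}) \ {x | ∃ a ∈ S \ {0}, ∃ b ∈ S \ {0}, x = a + b}

/-- Embedding dimension. -/
noncomputable def embdim (S : Set ℕ) : ℕ := (msg S).ncard

/-- Second smallest minimal generator. -/
noncomputable def secondGen (S : Set ℕ) : ℕ := sInf (msg S \ {mult S})

theorem stmt6 (S : Set ℕ) (hNS : IsNumericalSemigroup S)
    (hnonsym : typ S ≠ 1) (hmF : mult S < frob S)
    (hAS : 2 * genus S = frob S + typ S) (hMRT : redtyp S = typ S) :
    S = Delta (mult S) \ {2 * mult S - typ S} ∧ 2 ≤ typ S ∧ typ S < mult S := by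
  classical
  obtain ⟨h0S, hadd, hfin⟩ := hNS
  set F := frob S with hFdef
  set m := mult S with hmdef
  -- basic facts
  have hFne : Sᶜ.Nonempty := by
    by_contra h
    rw [Set.not_nonempty_iff_eq_empty] at h
    have : F = 0 := by rw [hFdef, frob, h, csSup_empty]; rfl
    omega
  have hFgap : F ∉ S := Set.Nonempty.csSup_mem hFne hfin
  have hgap_le : ∀ x : ℕ, x ∉ S → x ≤ F := fun x hx => le_csSup hfin.bddAbove hx
  have hgt : ∀ x : ℕ, F < x → x ∈ S := by
    intro x hx; by_contra h; exact absurd (hgap_le x h) (by omega)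
  have hmne : {s ∈ S | s ≠ 0}.Nonempty := ⟨F + 1, hgt _ (by omega), by omega⟩
  have hmmem := Nat.sInf_mem hmne
  have hmS : m ∈ S := hmmem.1
  have hm0 : m ≠ 0 := hmmem.2
  have hm_le : ∀ s ∈ S, s ≠ 0 → m ≤ s := fun s hs h => Nat.sInf_le ⟨hs, h⟩
  have hlt_m : ∀ x : ℕ, x ≠ 0 → x < m → x ∉ S := by
    intro x hx0 hxm hxS; exact absurd (hm_le x hxS hx0) (by omega)
  -- ZS membership
  have hZS : ∀ z : ℤ, z ∈ ZS S ↔ 0 ≤ z ∧ z.toNat ∈ S := by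
    intro z; constructor
    · rintro ⟨n, hn, rfl⟩; simpa using hn
    · rintro ⟨hz, hn⟩; exact ⟨z.toNat, hn, Int.toNat_of_nonneg hz⟩
  have hZS_nat : ∀ n : ℕ, (n : ℤ) ∈ ZS S ↔ n ∈ S := by
    intro n; rw [hZS]; simp
  have hZS_gt : ∀ z : ℤ, (F : ℤ) < z → z ∈ ZS S := by
    intro z hz
    refine (hZS z).mpr ⟨by omega, hgt _ (by omega)⟩
  -- PF facts
  have hFnotZS : (F : ℤ) ∉ ZS S := fun h => hFgap ((hZS_nat F).mp h)
  have hPF_F : (F : ℤ) ∈ PF S := by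
    refine ⟨hFnotZS, fun s hs hs0 => hZS_gt _ ?_⟩
    omega
  have hPF_ub : ∀ x ∈ PF S, x ≤ (F : ℤ) := by
    intro x hx
    by_contra h
    exact hx.1 (hZS_gt x (by omega))
  have hPF_lb : ∀ x ∈ PF S, 1 ≤ x := by
    intro x hx
    have hxm := hx.2 m hmS hm0
    rw [hZS] at hxm
    by_contra h
    push_neg at h
    have hx0 : x ≠ 0 := by
      intro h'; subst h'
      exact hx.1 ((hZS_nat 0).mpr h0S)
    have h1 : (x + (m : ℤ)).toNat < m := by omega
    have h2 : (x + (m : ℤ)).toNat = 0 := by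
      by_contra h2
      exact hlt_m _ h2 h1 hxm.2
    have hxm' : x = -(m : ℤ) := by omega
    have hsS : m + F ∈ S := hgt _ (by omega)
    have h3 := hx.2 _ hsS (by omega)
    rw [hxm'] at h3
    have h4 : (-(m:ℤ) + ((m + F : ℕ) : ℤ)) = (F : ℤ) := by push_cast; ring
    rw [h4] at h3
    exact hFnotZS h3
  have hPFfin : (PF S).Finite :=
    (Set.finite_Icc (1 : ℤ) (F : ℤ)).subset (fun x hx => ⟨hPF_lb x hx, hPF_ub x hx⟩)
  have hrPFsub : rPF S ⊆ PF S := by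
    rintro x ⟨hx1, hx2, hx3⟩
    refine ⟨hx1, fun s hs hs0 => hZS_gt _ ?_⟩
    have := hm_le s hs hs0
    omega
  have htyp_def : typ S = (PF S).ncard := rfl
  have hredtyp_def : redtyp S = (rPF S).ncard := rfl
  have hrPF_eq : rPF S = PF S :=
    Set.eq_of_subset_of_ncard_le hrPFsub (by omega) hPFfin
  have ht1 : 1 ≤ typ S := by
    have : 0 < (PF S).ncard := (Set.ncard_pos hPFfin).mpr ⟨_, hPF_F⟩
    omega
  have ht2 : 2 ≤ typ S := by omega
  -- counting
  set T : Finset ℕ := hfin.toFinset with hTdef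
  have hTmem : ∀ x : ℕ, x ∈ T ↔ x ∉ S := fun x => hfin.mem_toFinset
  have hTcard : T.card = genus S := by
    rw [genus, Set.ncard_eq_toFinset_card _ hfin]
  set B : Finset ℕ := T.image (fun x => F - x) with hBdef
  have hTle : ∀ x ∈ T, x ≤ F := fun x hx => hgap_le x ((hTmem x).1 hx)
  have hBcard : B.card = T.card := by
    apply Finset.card_image_of_injOn
    intro x hx y hy hxy
    have := hTle x hx; have := hTle y hy
    simp only at hxy
    omega
  have hunion : T ∪ B = Finset.range (F + 1) := by
    ext x
    simp only [Finset.mem_union, Finset.mem_range, hBdef, Finset.mem_image]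
    constructor
    · rintro (hx | ⟨y, hy, rfl⟩)
      · have := hTle x hx; omega
      · have := hTle y hy; omega
    · intro hxF
      by_cases hxS : x ∈ S
      · right
        refine ⟨F - x, ?_, by omega⟩
        rw [hTmem]
        intro hFx
        have hFmem : x + (F - x) ∈ S := hadd x hxS _ hFx
        rw [Nat.add_sub_cancel' (by omega)] at hFmem
        exact hFgap hFmem
      · left; exact (hTmem x).2 hxS
  have hcount : (T ∩ B).card + 1 = typ S := by
    have h1 := Finset.card_union_add_card_inter T B
    rw [hunion, Finset.card_range, hBcard, hTcard] at h1
    omega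
  -- gap pairs from PF
  have hgap_pair : ∀ f : ℤ, f ∈ PF S → f ≠ (F : ℤ) → f.toNat ∉ S ∧ F - f.toNat ∉ S := by
    intro f hf hfne
    have hf1 := hPF_lb f hf
    have hfF := hPF_ub f hf
    have hfgap : f.toNat ∉ S := fun h => hf.1 ((hZS f).mpr ⟨by omega, h⟩)
    refine ⟨hfgap, ?_⟩
    intro h
    have h2 := hf.2 _ h (by omega)
    rw [hZS] at h2
    have h3 : (f + ((F - f.toNat : ℕ) : ℤ)).toNat = F := by omega
    rw [h3] at h2
    exact hFgap h2.2
  have hD : Int.toNat '' (PF S \ {(F : ℤ)}) = ↑(T ∩ B) := by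
    apply Set.eq_of_subset_of_ncard_le
    · rintro _ ⟨f, ⟨hfPF, hfne⟩, rfl⟩
      have hf1 := hPF_lb f hfPF
      have hfF := hPF_ub f hfPF
      obtain ⟨hg1, hg2⟩ := hgap_pair f hfPF hfne
      refine Finset.mem_coe.mpr (Finset.mem_inter.mpr ⟨(hTmem _).2 hg1, ?_⟩)
      rw [hBdef, Finset.mem_image]
      exact ⟨F - f.toNat, (hTmem _).2 hg2, by omega⟩
    · rw [Set.ncard_coe_finset,
        Set.ncard_image_of_injOn (fun a ha b hb hab => by
          have := hPF_lb a ha.1; have := hPF_lb b hb.1; omega),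
        Set.ncard_diff_singleton_of_mem hPF_F]
      omega
    · exact (T ∩ B).finite_toSet
  have hmemPF : ∀ x : ℕ, x ∉ S → F - x ∉ S → x ≤ F → (x : ℤ) ∈ PF S := by
    intro x hx1 hx2 hxF
    have hxTB : x ∈ T ∩ B := Finset.mem_inter.mpr
      ⟨(hTmem x).2 hx1, by rw [hBdef, Finset.mem_image]; exact ⟨F - x, (hTmem _).2 hx2, by omega⟩⟩
    have hxD : x ∈ Int.toNat '' (PF S \ {(F : ℤ)}) := by
      rw [hD]; exact Finset.mem_coe.mpr hxTB
    obtain ⟨f, ⟨hf, hfne⟩, rfl⟩ := hxD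
    have hf1 := hPF_lb f hf
    rwa [Int.toNat_of_nonneg (by omega)]
  -- key bound
  have hkey : ∀ f : ℤ, f ∈ PF S → f ≠ (F : ℤ) → f ≤ (m : ℤ) - 1 := by
    intro f hf hfne
    have hf1 := hPF_lb f hf
    have hfF := hPF_ub f hf
    obtain ⟨hg1, hg2⟩ := hgap_pair f hf hfne
    have hswap : ((F - f.toNat : ℕ) : ℤ) ∈ PF S := by
      apply hmemPF (F - f.toNat) hg2 ?_ (by omega)
      have : F - (F - f.toNat) = f.toNat := by omega
      rw [this]; exact hg1
    rw [← hrPF_eq] at hswap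
    obtain ⟨_, hlb, _⟩ := hswap
    omega
  have hF2m : F + 2 ≤ 2 * m := by
    obtain ⟨f₀, hf₀, hf₀ne⟩ := Set.exists_ne_of_one_lt_ncard (s := PF S) (by omega) ((F : ℤ))
    have h1 := hkey f₀ hf₀ hf₀ne
    have h2 : (F : ℤ) - (m : ℤ) + 1 ≤ f₀ := by
      rw [← hrPF_eq] at hf₀; exact hf₀.2.1
    omega
  -- gap characterization
  have hgapchar : ∀ x : ℕ, x ∉ S ↔ (x ≠ 0 ∧ x < m) ∨ x = F := by
    intro x
    constructor
    · intro hx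
      by_cases hxF : x = F
      · right; exact hxF
      left
      have hxle : x ≤ F := hgap_le x hx
      have hx0 : x ≠ 0 := fun h => hx (h ▸ h0S)
      refine ⟨hx0, ?_⟩
      by_contra h
      push_neg at h
      have hxPF : (x : ℤ) ∈ PF S := by
        rw [← hrPF_eq]
        exact ⟨fun hz => hx ((hZS_nat x).mp hz), by omega, by omega⟩
      have := hkey x hxPF (by omega)
      omega
    · rintro (⟨hx0, hxm⟩ | rfl)
      · exact hlt_m x hx0 hxm
      · exact hFgap
  -- compute typ
  have hrPF_char : rPF S = Set.Icc ((F : ℤ) - m + 1) ((m : ℤ) - 1) ∪ {(F : ℤ)} := by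
    ext x
    simp only [rPF, Set.mem_setOf_eq, Set.mem_union, Set.mem_Icc, Set.mem_singleton_iff]
    constructor
    · rintro ⟨hx1, hx2, hx3⟩
      have hx0 : 0 ≤ x := by omega
      have hxg : x.toNat ∉ S := fun h => hx1 ((hZS x).mpr ⟨hx0, h⟩)
      rw [hgapchar] at hxg
      rcases hxg with ⟨h1, h2⟩ | h3
      · left; omega
      · right; omega
    · rintro (⟨h1, h2⟩ | rfl)
      · refine ⟨?_, h1, by omega⟩
        intro hz
        rw [hZS] at hz
        exact (hgapchar x.toNat).mpr (Or.inl ⟨by omega, by omega⟩) hz.2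
      · exact ⟨hFnotZS, by omega, le_refl _⟩
  have htyp_val : (typ S : ℤ) = 2 * m - F := by
    have h1 : typ S = (rPF S).ncard := by rw [hrPF_eq]; exact htyp_def
    rw [hrPF_char, Set.ncard_union_eq ?_ ?_ ?_] at h1
    · rw [← Finset.coe_Icc, Set.ncard_coe_finset, Int.card_Icc, Set.ncard_singleton] at h1
      omega
    · simp only [Set.disjoint_singleton_right, Set.mem_Icc]
      omega
    · exact Set.finite_Icc _ _
    · exact Set.finite_singleton _
  have htm : typ S < m := by omega
  have hFval : 2 * m - typ S = F := by omega
  refine ⟨?_, ht2, htm⟩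
  rw [hFval]
  ext x
  simp only [Delta, Set.mem_diff, Set.mem_union, Set.mem_singleton_iff, Set.mem_setOf_eq]
  constructor
  · intro hxS
    refine ⟨?_, fun h => hFgap (h ▸ hxS)⟩
    by_cases hx0 : x = 0
    · left; exact hx0
    · right
      by_contra h
      push_neg at h
      exact hlt_m x hx0 h hxS
  · rintro ⟨hx, hxF⟩
    by_contra hxS
    rw [hgapchar] at hxS
    rcases hxS with ⟨h1, h2⟩ | h3
    · rcases hx with h | h
      · exact h1 h
      · omega
    · exact hxF h3
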